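/- Let f_0,…,f_m, g_0,…,g_n be a multilinear generalized polymorphism where f_0, g_0 depend on all inputs, all functions have degree ≥ 2, and f_1,…,f_m, g_1,…,g_n are balanced and 2-valued-like. Then for every i ∈ [n], the Fourier support of g_i contains a unique inclusion-maximal set, namely dep(g_i); and for every j ∈ [m], the Fourier support of f_j contains a unique inclusion-maximal set, namely dep(f_j). -/

import Mathlib

open Finset
open scoped Classical

/-- `x` lies on the Boolean cube `{-1,1}^ι`. -/
def IsCube {ι : Type*} (x : ι → ℝ) : Prop := ∀ i, x i = 1 ∨ x i = -1

/-- `f` depends on coordinate `w` (over the Boolean cube). -/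
def DependsOnCube {ι : Type*} [DecidableEq ι] (f : (ι → ℝ) → ℝ) (w : ι) : Prop :=
  ∃ x : ι → ℝ, IsCube x ∧ f (Function.update x w 1) ≠ f (Function.update x w (-1))

/-- The coefficient function `c` is that of a dictator (nonconstant, depending on a
single coordinate). -/
def IsDictatorCoeff {ι : Type*} [DecidableEq ι] (c : Finset ι → ℝ) : Prop :=
  ∃ w : ι, c {w} ≠ 0 ∧ ∀ S : Finset ι, c S ≠ 0 → S ⊆ {w}

/-- The multilinear polynomial with coefficients `c` has degree exactly 1. -/
def HasDegreeOne {ι : Type*} (c : Finset ι → ℝ) : Prop :=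
  (∀ S : Finset ι, c S ≠ 0 → S.card ≤ 1) ∧ ∃ S : Finset ι, c S ≠ 0 ∧ S.card = 1

/-- `c` is the coefficient function of a 2-valued-like function. -/
def TwoValuedLike {ι : Type*} [DecidableEq ι] (c : Finset ι → ℝ) : Prop :=
  (HasDegreeOne c ↔ IsDictatorCoeff c) ∧
  (¬ IsDictatorCoeff c → ∀ w : ι, (∃ S, c S ≠ 0 ∧ w ∈ S) →
    ∃ S : Finset ι, c S ≠ 0 ∧ 2 ≤ S.card ∧ w ∈ S)

noncomputable section
namespace S19
set_option linter.unusedSectionVars false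


variable {ι : Type*} [Fintype ι] [DecidableEq ι]


def bval (b : Bool) : ℝ := if b then 1 else -1

def chi (S : Finset ι) (σ : ι → Bool) : ℝ := ∏ i ∈ S, bval (σ i)

def cval (σ : ι → Bool) : ι → ℝ := fun i => bval (σ i)

lemma chi_eq_prod_univ (S : Finset ι) (σ : ι → Bool) :
    chi S σ = ∏ i, (if i ∈ S then bval (σ i) else 1) := by
  rw [Finset.prod_ite_mem, univ_inter]; rfl

lemma sum_chi_mul_chi (S T : Finset ι) :
    ∑ σ : ι → Bool, chi S σ * chi T σ = if S = T then (2:ℝ) ^ (Fintype.card ι) else 0 := by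
  have key : ∀ σ : ι → Bool, chi S σ * chi T σ =
      ∏ i, ((if i ∈ S then bval (σ i) else 1) * (if i ∈ T then bval (σ i) else 1)) := by
    intro σ
    rw [chi_eq_prod_univ, chi_eq_prod_univ, ← Finset.prod_mul_distrib]
  simp only [key]
  rw [← Fintype.piFinset_univ]
  have hps := Finset.prod_univ_sum (t := fun _ : ι => (univ : Finset Bool))
    (f := fun i b => (if i ∈ S then bval b else 1) * (if i ∈ T then bval b else 1))
  rw [← hps]
  by_cases h : S = T
  · subst h
    rw [if_pos rfl]
    have : ∀ i : ι, (∑ b : Bool, ((if i ∈ S then bval b else 1) * (if i ∈ S then bval b else 1))) = 2 := by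
      intro i
      by_cases hi : i ∈ S <;> simp [hi, Fintype.sum_bool, bval] <;> norm_num
    rw [Finset.prod_congr rfl fun i _ => this i, Finset.prod_const, card_univ]
  · rw [if_neg h]
    have : ∃ i, (i ∈ S ∧ i ∉ T) ∨ (i ∈ T ∧ i ∉ S) := by
      by_contra hc
      push_neg at hc
      exact h (Finset.ext fun i => ⟨(hc i).1, (hc i).2⟩)
    obtain ⟨i, hi⟩ := this
    apply Finset.prod_eq_zero (Finset.mem_univ i)
    rcases hi with ⟨h1, h2⟩ | ⟨h1, h2⟩ <;>
      simp [h1, h2, Fintype.sum_bool, bval]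

lemma sum_poly_mul_chi (c : Finset ι → ℝ) (T : Finset ι) :
    ∑ σ : ι → Bool, (∑ S, c S * chi S σ) * chi T σ = 2 ^ (Fintype.card ι) * c T := by
  simp only [Finset.sum_mul]
  rw [Finset.sum_comm]
  have : ∀ S : Finset ι, ∑ σ : ι → Bool, c S * chi S σ * chi T σ
      = c S * (if S = T then (2:ℝ) ^ (Fintype.card ι) else 0) := by
    intro S
    rw [← sum_chi_mul_chi S T, Finset.mul_sum]
    exact Finset.sum_congr rfl fun σ _ => by ring
  rw [Finset.sum_congr rfl fun S _ => this S]
  simp [Finset.sum_ite_eq', mul_comm]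

lemma coeff_eq_of_cube {c d : Finset ι → ℝ}
    (h : ∀ σ : ι → Bool, ∑ S, c S * chi S σ = ∑ S, d S * chi S σ) :
    c = d := by
  funext T
  have h2 : (2:ℝ) ^ (Fintype.card ι) * c T = 2 ^ (Fintype.card ι) * d T := by
    rw [← sum_poly_mul_chi c T, ← sum_poly_mul_chi d T]
    exact Finset.sum_congr rfl fun σ _ => by rw [h σ]
  have : (2:ℝ) ^ (Fintype.card ι) ≠ 0 := by positivity
  exact mul_left_cancel₀ this h2

lemma isCube_cval (σ : ι → Bool) : IsCube (cval σ) := by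
  intro i; unfold cval bval; split
  · exact Or.inl rfl
  · exact Or.inr rfl

lemma dependsOn_iff (F : (ι → ℝ) → ℝ) (c : Finset ι → ℝ)
    (hexp : ∀ x, F x = ∑ S, c S * ∏ i ∈ S, x i) (w : ι) :
    DependsOnCube F w ↔ ∃ S, c S ≠ 0 ∧ w ∈ S := by
  constructor
  · rintro ⟨x, _, hne⟩
    by_contra hc
    push_neg at hc
    apply hne
    rw [hexp, hexp]
    refine Finset.sum_congr rfl fun S _ => ?_
    by_cases hcS : c S = 0
    · rw [hcS, zero_mul, zero_mul]
    · have hw : w ∉ S := fun hw => (hc S hcS) hw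
      congr 1
      exact Finset.prod_congr rfl fun i hi =>
        (Function.update_of_ne (fun h => hw (by rw [← h]; exact hi)) _ _).trans
          (Function.update_of_ne (fun h => hw (by rw [← h]; exact hi)) _ _).symm
  · rintro ⟨S0, hS0, hw0⟩
    by_contra hnd
    set d : Finset ι → ℝ := fun T => if w ∈ T then 0 else 2 * c (insert w T) with hd
    have hzero : ∀ σ : ι → Bool, ∑ T, d T * chi T σ = ∑ T, (0:ℝ) * chi T σ := by
      intro σ
      have heq : F (Function.update (cval σ) w 1) = F (Function.update (cval σ) w (-1)) := by
        by_contra hne; exact hnd ⟨cval σ, isCube_cval σ, hne⟩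
      rw [hexp, hexp] at heq
      have hdiff : ∑ S, (c S * ∏ i ∈ S, Function.update (cval σ) w 1 i
          - c S * ∏ i ∈ S, Function.update (cval σ) w (-1) i) = 0 := by
        rw [Finset.sum_sub_distrib, heq, sub_self]
      have hterm : ∀ S : Finset ι,
          c S * ∏ i ∈ S, Function.update (cval σ) w 1 i
          - c S * ∏ i ∈ S, Function.update (cval σ) w (-1) i
          = if w ∈ S then 2 * c S * chi (S.erase w) σ else 0 := by
        intro S
        by_cases hw : w ∈ S
        · rw [if_pos hw]
          have hrest : ∀ v : ℝ, ∏ i ∈ S.erase w, Function.update (cval σ) w v i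
              = chi (S.erase w) σ :=
            fun v => Finset.prod_congr rfl fun i hi =>
              Function.update_of_ne (Finset.ne_of_mem_erase hi) _ _
          rw [← Finset.mul_prod_erase S _ hw, ← Finset.mul_prod_erase S _ hw,
            Function.update_self, Function.update_self, hrest, hrest]
          ring
        · rw [if_neg hw]
          have : ∀ v : ℝ, ∏ i ∈ S, Function.update (cval σ) w v i
              = ∏ i ∈ S, cval σ i :=
            fun v => Finset.prod_congr rfl fun i hi =>
              Function.update_of_ne (fun h => hw (by rw [← h]; exact hi)) _ _
          rw [this, this, sub_self]
      rw [Finset.sum_congr rfl fun S _ => hterm S] at hdiff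
      have hre : ∑ S, (if w ∈ S then (2:ℝ) * c S * chi (S.erase w) σ else 0)
          = ∑ T, d T * chi T σ := by
        have h1 : ∑ T, d T * chi T σ
            = ∑ T ∈ univ.filter (fun T => w ∉ T), 2 * c (insert w T) * chi T σ := by
          rw [Finset.sum_filter]
          refine Finset.sum_congr rfl fun T _ => ?_
          by_cases hT : w ∈ T <;> simp [hd, hT, mul_assoc]
        have h2 : ∑ S, (if w ∈ S then (2:ℝ) * c S * chi (S.erase w) σ else 0)
            = ∑ S ∈ univ.filter (fun S => w ∈ S), 2 * c S * chi (S.erase w) σ := by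
          rw [Finset.sum_filter]
        rw [h1, h2]
        refine Finset.sum_bij' (fun S _ => S.erase w) (fun T _ => insert w T)
          ?_ ?_ ?_ ?_ ?_
        · intro S hS
          simp only [mem_filter, mem_univ, true_and] at hS ⊢
          exact Finset.notMem_erase w S
        · intro T hT
          simp only [mem_filter, mem_univ, true_and] at hT ⊢
          exact Finset.mem_insert_self w T
        · intro S hS
          simp only [mem_filter, mem_univ, true_and] at hS
          exact Finset.insert_erase hS
        · intro T hT
          simp only [mem_filter, mem_univ, true_and] at hT
          exact Finset.erase_insert hT
        · intro S hS
          simp only [mem_filter, mem_univ, true_and] at hS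
          rw [Finset.insert_erase hS]
      rw [hre] at hdiff
      rw [hdiff]
      simp
    have := congrFun (coeff_eq_of_cube hzero) (S0.erase w)
    simp only [hd] at this
    rw [if_neg (Finset.notMem_erase w S0), Finset.insert_erase hw0] at this
    exact hS0 (by linarith)


section Core
variable {ι κ : Type*} [Fintype ι] [DecidableEq ι] [Fintype κ] [DecidableEq κ]


/-- The master coefficient relation of a multilinear generalized polymorphism. -/
def Star (a : Finset ι → ℝ) (b : Finset κ → ℝ)
    (p : ι → Finset κ → ℝ) (q : κ → Finset ι → ℝ) : Prop :=
  ∀ ρ : ι → Finset κ,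
    a (univ.filter fun i => (ρ i).Nonempty)
        * ∏ i ∈ univ.filter (fun i => (ρ i).Nonempty), p i (ρ i)
    = b (univ.biUnion ρ) * ∏ j ∈ univ.biUnion ρ, q j (univ.filter fun i => j ∈ ρ i)

lemma star_symm {a : Finset ι → ℝ} {b : Finset κ → ℝ}
    {p : ι → Finset κ → ℝ} {q : κ → Finset ι → ℝ}
    (h : Star a b p q) : Star b a q p := by
  intro ρ'
  have h1 := h (fun i => univ.filter fun j => i ∈ ρ' j)
  have e1 : (univ.filter fun i => (univ.filter fun j => i ∈ ρ' j).Nonempty)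
      = univ.biUnion ρ' := by
    ext i; simp [Finset.filter_nonempty_iff]
  have e2 : (univ.biUnion fun i => univ.filter fun j => i ∈ ρ' j)
      = univ.filter fun j => (ρ' j).Nonempty := by
    ext j; simp only [mem_biUnion, mem_filter, mem_univ, true_and]
    exact ⟨fun ⟨i, hi⟩ => ⟨i, hi⟩, fun ⟨i, hi⟩ => ⟨i, hi⟩⟩
  have e3 : ∀ j : κ, (univ.filter fun i => j ∈ (univ.filter fun j' => i ∈ ρ' j')) = ρ' j := by
    intro j; ext i; simp
  rw [e1, e2] at h1
  simp only [e3] at h1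
  exact h1.symm

lemma fwd {a : Finset ι → ℝ} {b : Finset κ → ℝ}
    {p : ι → Finset κ → ℝ} {q : κ → Finset ι → ℝ}
    (hstar : Star a b p q) (hp0 : ∀ i T, p i T ≠ 0 → T.Nonempty)
    {R : Finset ι} (haR : a R ≠ 0) (M : ι → Finset κ) (hM : ∀ i ∈ R, p i (M i) ≠ 0) :
    b (R.biUnion M) ≠ 0 ∧ ∀ j ∈ R.biUnion M, q j (R.filter fun i => j ∈ M i) ≠ 0 := by
  set ρ : ι → Finset κ := fun i => if i ∈ R then M i else ∅ with hρ
  have hfil : (univ.filter fun i => (ρ i).Nonempty) = R := by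
    ext i
    simp only [mem_filter, mem_univ, true_and, hρ]
    constructor
    · intro hne
      by_contra hiR
      rw [if_neg hiR] at hne
      exact Finset.not_nonempty_empty hne
    · intro hiR
      rw [if_pos hiR]
      exact hp0 i (M i) (hM i hiR)
  have hbi : univ.biUnion ρ = R.biUnion M := by
    ext j
    simp only [mem_biUnion, mem_univ, true_and, hρ]
    constructor
    · rintro ⟨i, hi⟩
      by_cases hiR : i ∈ R
      · exact ⟨i, hiR, by rwa [if_pos hiR] at hi⟩
      · rw [if_neg hiR] at hi; exact absurd hi (Finset.notMem_empty j)
    · rintro ⟨i, hiR, hi⟩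
      exact ⟨i, by rwa [if_pos hiR]⟩
  have hcol : ∀ j : κ, (univ.filter fun i => j ∈ ρ i) = R.filter fun i => j ∈ M i := by
    intro j
    ext i
    simp only [mem_filter, mem_univ, true_and, hρ]
    constructor
    · intro hi
      by_cases hiR : i ∈ R
      · exact ⟨hiR, by rwa [if_pos hiR] at hi⟩
      · rw [if_neg hiR] at hi; exact absurd hi (Finset.notMem_empty j)
    · rintro ⟨hiR, hi⟩
      rwa [if_pos hiR]
  have h1 := hstar ρ
  rw [hfil, hbi] at h1
  simp only [hcol] at h1
  have hL : a R * ∏ i ∈ R, p i (ρ i) ≠ 0 := by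
    apply mul_ne_zero haR
    rw [Finset.prod_ne_zero_iff]
    intro i hiR
    rw [hρ]; simp only [if_pos hiR]
    exact hM i hiR
  have hprodeq : ∏ i ∈ R, p i (ρ i) = ∏ i ∈ R, p i (M i) := by
    refine Finset.prod_congr rfl fun i hiR => by rw [hρ]; simp only [if_pos hiR]
  rw [hprodeq] at hL h1
  rw [h1] at hL
  refine ⟨fun hb0 => hL (by rw [hb0, zero_mul]), ?_⟩
  intro j hj
  have := right_ne_zero_of_mul hL
  rw [Finset.prod_ne_zero_iff] at this
  exact this j hj

lemma transfer {a : Finset ι → ℝ} {b : Finset κ → ℝ}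
    {p : ι → Finset κ → ℝ} {q : κ → Finset ι → ℝ}
    (hstar : Star a b p q) (hp0 : ∀ i T, p i T ≠ 0 → T.Nonempty)
    (hpne : ∀ i, ∃ T, p i T ≠ 0) (ha : ∀ i, ∃ R, a R ≠ 0 ∧ i ∈ R)
    (i0 : ι) (j : κ) (hj : ∃ T, p i0 T ≠ 0 ∧ j ∈ T) :
    ∃ N, q j N ≠ 0 ∧ i0 ∈ N := by
  obtain ⟨T, hT, hjT⟩ := hj
  obtain ⟨R, haR, hi0R⟩ := ha i0
  set M : ι → Finset κ := fun i => if i = i0 then T else Classical.choose (hpne i) with hMdef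
  have hM : ∀ i ∈ R, p i (M i) ≠ 0 := by
    intro i _
    rw [hMdef]
    by_cases h : i = i0
    · subst h; simp only [if_pos rfl]; exact hT
    · simp only [if_neg h]; exact Classical.choose_spec (hpne i)
  obtain ⟨_, hq⟩ := fwd hstar hp0 haR M hM
  have hMi0 : M i0 = T := by rw [hMdef]; simp
  have hjmem : j ∈ R.biUnion M := mem_biUnion.mpr ⟨i0, hi0R, by rw [hMi0]; exact hjT⟩
  exact ⟨R.filter fun i => j ∈ M i, hq j hjmem,
    mem_filter.mpr ⟨hi0R, by rw [hMi0]; exact hjT⟩⟩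

lemma step {a : Finset ι → ℝ} {b : Finset κ → ℝ}
    {p : ι → Finset κ → ℝ} {q : κ → Finset ι → ℝ}
    (hstar : Star a b p q)
    (hp0 : ∀ i T, p i T ≠ 0 → T.Nonempty) (hq0 : ∀ j S, q j S ≠ 0 → S.Nonempty)
    (hpne : ∀ i, ∃ T, p i T ≠ 0) (hqne : ∀ j, ∃ S, q j S ≠ 0)
    (hq2 : ∀ j i, (∃ S, q j S ≠ 0 ∧ i ∈ S) → ∃ S, q j S ≠ 0 ∧ 2 ≤ S.card ∧ i ∈ S)
    (ha : ∀ i, ∃ R, a R ≠ 0 ∧ i ∈ R) (hb : ∀ j, ∃ C, b C ≠ 0 ∧ j ∈ C)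
    (i0 : ι) (T : Finset κ) (hT : p i0 T ≠ 0)
    (js : κ) (hjs : ∃ T2, p i0 T2 ≠ 0 ∧ js ∈ T2) :
    ∃ T', p i0 T' ≠ 0 ∧ T ⊆ T' ∧ js ∈ T' := by
  have h1 : ∃ N, q js N ≠ 0 ∧ i0 ∈ N := transfer hstar hp0 hpne ha i0 js hjs
  obtain ⟨N, hN, hNcard, hi0N⟩ := hq2 js i0 h1
  obtain ⟨i1, hi1N, hi1ne⟩ := Finset.exists_mem_ne (s := N) (by omega) i0
  obtain ⟨C', hbC', hjsC'⟩ := hb js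
  set N' : κ → Finset ι := fun j => if j = js then N else Classical.choose (hqne j) with hN'def
  have hN' : ∀ j ∈ C', q j (N' j) ≠ 0 := by
    intro j _
    rw [hN'def]
    by_cases h : j = js
    · subst h; simp only [if_pos rfl]; exact hN
    · simp only [if_neg h]; exact Classical.choose_spec (hqne j)
  obtain ⟨haR', hrows⟩ := fwd (star_symm hstar) hq0 hbC' N' hN'
  set R' := C'.biUnion N' with hR'def
  have hN'js : N' js = N := by rw [hN'def]; simp
  have hi0R' : i0 ∈ R' := mem_biUnion.mpr ⟨js, hjsC', by rw [hN'js]; exact hi0N⟩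
  have hi1R' : i1 ∈ R' := mem_biUnion.mpr ⟨js, hjsC', by rw [hN'js]; exact hi1N⟩
  set M : ι → Finset κ := fun i => if i = i0 then T else C'.filter fun j => i ∈ N' j
    with hMdef
  have hM : ∀ i ∈ R', p i (M i) ≠ 0 := by
    intro i hi
    rw [hMdef]
    by_cases h : i = i0
    · subst h; simp only [if_pos rfl]; exact hT
    · simp only [if_neg h]; exact hrows i hi
  obtain ⟨hbC'', _⟩ := fwd hstar hp0 haR' M hM
  set C'' := R'.biUnion M with hC''def
  have hMi0 : M i0 = T := by rw [hMdef]; simp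
  have hTC'' : T ⊆ C'' := fun j hj => mem_biUnion.mpr ⟨i0, hi0R', by rw [hMi0]; exact hj⟩
  have hjsC'' : js ∈ C'' := by
    refine mem_biUnion.mpr ⟨i1, hi1R', ?_⟩
    rw [hMdef]
    simp only [if_neg hi1ne]
    exact mem_filter.mpr ⟨hjsC', by rw [hN'js]; exact hi1N⟩
  set N'' : κ → Finset ι := fun j =>
    if h : ∃ S, q j S ≠ 0 ∧ i0 ∈ S then Classical.choose h else Classical.choose (hqne j)
    with hN''def
  have hN'' : ∀ j ∈ C'', q j (N'' j) ≠ 0 := by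
    intro j _
    rw [hN''def]
    by_cases h : ∃ S, q j S ≠ 0 ∧ i0 ∈ S
    · simp only [dif_pos h]; exact (Classical.choose_spec h).1
    · simp only [dif_neg h]; exact Classical.choose_spec (hqne j)
  have hi0N'' : ∀ j : κ, (∃ T2, p i0 T2 ≠ 0 ∧ j ∈ T2) → i0 ∈ N'' j := by
    intro j hj
    have h := transfer hstar hp0 hpne ha i0 j hj
    rw [hN''def]
    simp only [dif_pos h]
    exact (Classical.choose_spec h).2
  obtain ⟨_, hrows2⟩ := fwd (star_symm hstar) hq0 hbC'' N'' hN''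
  have hi0mem : i0 ∈ C''.biUnion N'' :=
    mem_biUnion.mpr ⟨js, hjsC'', hi0N'' js hjs⟩
  refine ⟨C''.filter fun j => i0 ∈ N'' j, hrows2 i0 hi0mem, ?_, ?_⟩
  · intro j hjT
    exact mem_filter.mpr ⟨hTC'' hjT, hi0N'' j ⟨T, hT, hjT⟩⟩
  · exact mem_filter.mpr ⟨hjsC'', hi0N'' js hjs⟩

lemma core {a : Finset ι → ℝ} {b : Finset κ → ℝ}
    {p : ι → Finset κ → ℝ} {q : κ → Finset ι → ℝ}
    (hstar : Star a b p q)
    (hp0 : ∀ i T, p i T ≠ 0 → T.Nonempty) (hq0 : ∀ j S, q j S ≠ 0 → S.Nonempty)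
    (hpne : ∀ i, ∃ T, p i T ≠ 0) (hqne : ∀ j, ∃ S, q j S ≠ 0)
    (hq2 : ∀ j i, (∃ S, q j S ≠ 0 ∧ i ∈ S) → ∃ S, q j S ≠ 0 ∧ 2 ≤ S.card ∧ i ∈ S)
    (ha : ∀ i, ∃ R, a R ≠ 0 ∧ i ∈ R) (hb : ∀ j, ∃ C, b C ≠ 0 ∧ j ∈ C)
    (i0 : ι) :
    p i0 (univ.filter fun j => ∃ T, p i0 T ≠ 0 ∧ j ∈ T) ≠ 0 := by
  set D := univ.filter fun j => ∃ T, p i0 T ≠ 0 ∧ j ∈ T with hD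
  have hsub : ∀ T, p i0 T ≠ 0 → T ⊆ D := by
    intro T hT j hj
    rw [hD]
    exact mem_filter.mpr ⟨mem_univ j, T, hT, hj⟩
  have main : ∀ k : ℕ, ∀ T, p i0 T ≠ 0 → (D \ T).card ≤ k → p i0 D ≠ 0 := by
    intro k
    induction k with
    | zero =>
      intro T hT hcard
      have : D \ T = ∅ := Finset.card_eq_zero.mp (Nat.le_zero.mp hcard)
      have hDT : D ⊆ T := fun j hj => by
        by_contra hjT
        exact (Finset.notMem_empty j) (this ▸ Finset.mem_sdiff.mpr ⟨hj, hjT⟩)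
      have : T = D := Finset.Subset.antisymm (hsub T hT) hDT
      rwa [← this]
    | succ k ih =>
      intro T hT hcard
      by_cases hempty : (D \ T) = ∅
      · have hDT : D ⊆ T := fun j hj => by
          by_contra hjT
          exact (Finset.notMem_empty j) (hempty ▸ Finset.mem_sdiff.mpr ⟨hj, hjT⟩)
        have : T = D := Finset.Subset.antisymm (hsub T hT) hDT
        rwa [← this]
      · obtain ⟨js, hjs⟩ := Finset.nonempty_iff_ne_empty.mpr hempty
        rw [Finset.mem_sdiff] at hjs
        have hjsD : ∃ T2, p i0 T2 ≠ 0 ∧ js ∈ T2 := (mem_filter.mp hjs.1).2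
        obtain ⟨T', hT', hTT', hjsT'⟩ :=
          step hstar hp0 hq0 hpne hqne hq2 ha hb i0 T hT js hjsD
        apply ih T' hT'
        have hss : D \ T' ⊆ (D \ T).erase js := by
          intro j hj
          rw [Finset.mem_sdiff] at hj
          rw [Finset.mem_erase, Finset.mem_sdiff]
          exact ⟨fun h => hj.2 (h ▸ hjsT'), hj.1, fun h => hj.2 (hTT' h)⟩
        calc (D \ T').card ≤ ((D \ T).erase js).card := Finset.card_le_card hss
          _ = (D \ T).card - 1 := Finset.card_erase_of_mem (Finset.mem_sdiff.mpr hjs)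
          _ ≤ k := by omega
  obtain ⟨T0, hT0⟩ := hpne i0
  exact main (D \ T0).card T0 hT0 le_rfl


end Core

section Comp
variable {ι κ : Type*} [Fintype ι] [DecidableEq ι] [Fintype κ] [DecidableEq κ]


lemma prod_eq_prod_univ_ite (h : ι → ℝ) (S : Finset ι) :
    ∏ i ∈ S, h i = ∏ i, if i ∈ S then h i else 1 := by
  rw [Finset.prod_ite_mem, univ_inter]

lemma comp_coeff (F : (ι → ℝ) → ℝ) (G : ι → (κ → ℝ) → ℝ)
    (Fc : Finset ι → ℝ) (Gc : ι → Finset κ → ℝ)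
    (hF : ∀ x, F x = ∑ S, Fc S * ∏ i ∈ S, x i)
    (hG : ∀ i y, G i y = ∑ T, Gc i T * ∏ j ∈ T, y j)
    (hG0 : ∀ i, Gc i ∅ = 0) (ρ : ι → Finset κ) :
    ∑ σ : ι → κ → Bool, F (fun i => G i (cval (σ i))) * ∏ i, chi (ρ i) (σ i)
    = 2 ^ (Fintype.card ι * Fintype.card κ) *
      (Fc (univ.filter fun i => (ρ i).Nonempty)
        * ∏ i ∈ univ.filter (fun i => (ρ i).Nonempty), Gc i (ρ i)) := by
  set R := univ.filter fun i => (ρ i).Nonempty with hR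
  have hiR : ∀ i : ι, i ∈ R ↔ (ρ i).Nonempty := by
    intro i; rw [hR, mem_filter]; simp
  have hstep1 : ∀ σ : ι → κ → Bool,
      F (fun i => G i (cval (σ i))) * ∏ i, chi (ρ i) (σ i)
      = ∑ S : Finset ι, Fc S *
          ∏ i, ((if i ∈ S then G i (cval (σ i)) else 1) * chi (ρ i) (σ i)) := by
    intro σ
    rw [hF, Finset.sum_mul]
    refine Finset.sum_congr rfl fun S _ => ?_
    rw [mul_assoc]
    congr 1
    rw [Finset.prod_mul_distrib]
    congr 1
    exact prod_eq_prod_univ_ite _ S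
  rw [Finset.sum_congr rfl fun σ _ => hstep1 σ, Finset.sum_comm]
  have hstep2 : ∀ S : Finset ι,
      ∑ σ : ι → κ → Bool, Fc S *
        ∏ i, ((if i ∈ S then G i (cval (σ i)) else 1) * chi (ρ i) (σ i))
      = Fc S * ∏ i, ∑ τ : κ → Bool, ((if i ∈ S then G i (cval τ) else 1) * chi (ρ i) τ) := by
    intro S
    rw [← Finset.mul_sum]
    congr 1
    have hps := Finset.prod_univ_sum (t := fun _ : ι => (univ : Finset (κ → Bool)))
      (f := fun i τ => (if i ∈ S then G i (cval τ) else 1) * chi (ρ i) τ)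
    rw [Fintype.piFinset_univ] at hps
    exact hps.symm
  rw [Finset.sum_congr rfl fun S _ => hstep2 S]
  have hfac : ∀ (S : Finset ι) (i : ι),
      (∑ τ : κ → Bool, ((if i ∈ S then G i (cval τ) else 1) * chi (ρ i) τ))
      = if i ∈ S then 2 ^ (Fintype.card κ) * Gc i (ρ i)
        else (if ρ i = ∅ then (2:ℝ) ^ Fintype.card κ else 0) := by
    intro S i
    by_cases hi : i ∈ S
    · simp only [if_pos hi]
      have hGτ : ∀ τ : κ → Bool, G i (cval τ) = ∑ T, Gc i T * chi T τ :=
        fun τ => hG i (cval τ)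
      rw [Finset.sum_congr rfl fun τ _ => by rw [hGτ τ]]
      exact sum_poly_mul_chi (Gc i) (ρ i)
    · simp only [if_neg hi, one_mul]
      have h0 := sum_chi_mul_chi (∅ : Finset κ) (ρ i)
      simp only [chi, Finset.prod_empty, one_mul] at h0
      simp only [chi]
      rw [h0]
      by_cases h : ρ i = ∅
      · rw [if_pos h.symm, if_pos h]
      · rw [if_neg (fun hh => h hh.symm), if_neg h]
  rw [Finset.sum_congr rfl fun S _ => by rw [Finset.prod_congr rfl fun i _ => hfac S i]]
  rw [Finset.sum_eq_single R]
  · -- value at R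
    have hPR : ∏ i, (if i ∈ R then (2:ℝ) ^ Fintype.card κ * Gc i (ρ i)
        else if ρ i = ∅ then (2:ℝ) ^ Fintype.card κ else 0)
        = 2 ^ (Fintype.card ι * Fintype.card κ) * ∏ i ∈ R, Gc i (ρ i) := by
      have hper : ∀ i : ι, (if i ∈ R then (2:ℝ) ^ Fintype.card κ * Gc i (ρ i)
          else if ρ i = ∅ then (2:ℝ) ^ Fintype.card κ else 0)
          = 2 ^ Fintype.card κ * (if i ∈ R then Gc i (ρ i) else 1) := by
        intro i
        by_cases hi : i ∈ R
        · rw [if_pos hi, if_pos hi]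
        · have : ρ i = ∅ := by
            rw [← Finset.not_nonempty_iff_eq_empty]
            exact fun hne => hi ((hiR i).mpr hne)
          rw [if_neg hi, if_pos this, if_neg hi, mul_one]
      rw [Finset.prod_congr rfl fun i _ => hper i, Finset.prod_mul_distrib,
        Finset.prod_const, card_univ, ← prod_eq_prod_univ_ite (fun i => Gc i (ρ i)) R,
        ← pow_mul, Nat.mul_comm]
    rw [hPR]
    ring
  · -- other S vanish
    intro S _ hSR
    have hex : ∃ i, (i ∈ S ∧ i ∉ R) ∨ (i ∈ R ∧ i ∉ S) := by
      by_contra hc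
      push_neg at hc
      exact hSR (Finset.ext fun i => ⟨(hc i).1, (hc i).2⟩)
    obtain ⟨i, hi⟩ := hex
    have : (∏ i, (if i ∈ S then (2:ℝ) ^ Fintype.card κ * Gc i (ρ i)
        else if ρ i = ∅ then (2:ℝ) ^ Fintype.card κ else 0)) = 0 := by
      apply Finset.prod_eq_zero (Finset.mem_univ i)
      rcases hi with ⟨h1, h2⟩ | ⟨h1, h2⟩
      · have : ρ i = ∅ := by
          rw [← Finset.not_nonempty_iff_eq_empty]
          exact fun hne => h2 ((hiR i).mpr hne)
        rw [if_pos h1, this, hG0 i, mul_zero]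
      · have : ρ i ≠ ∅ := by
          have := (hiR i).mp h1
          exact Finset.nonempty_iff_ne_empty.mp this
        rw [if_neg h2, if_neg this]
    rw [this, mul_zero]
  · intro h
    exact absurd (Finset.mem_univ R) h


def transposeEquiv (ι κ : Type*) : (ι → κ → Bool) ≃ (κ → ι → Bool) :=
  ⟨Function.swap, Function.swap, fun _ => rfl, fun _ => rfl⟩

lemma chi_transpose (ρ : ι → Finset κ) (σ : ι → κ → Bool) :
    ∏ i, chi (ρ i) (σ i)
    = ∏ j, chi (univ.filter fun i => j ∈ ρ i) (Function.swap σ j) := by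
  simp only [chi]
  exact Finset.prod_comm' (fun i j => by simp)

lemma twoValued_consequence {α : Type*} [DecidableEq α] {c : Finset α → ℝ}
    (h2 : TwoValuedLike c) (hdeg : ∃ S, c S ≠ 0 ∧ 2 ≤ S.card) :
    ∀ w, (∃ S, c S ≠ 0 ∧ w ∈ S) → ∃ S, c S ≠ 0 ∧ 2 ≤ S.card ∧ w ∈ S := by
  have hnd : ¬ IsDictatorCoeff c := by
    intro hd
    have hdeg1 : HasDegreeOne c := h2.1.mpr hd
    obtain ⟨S, hS, hcard⟩ := hdeg
    have := hdeg1.1 S hS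
    omega
  exact h2.2 hnd

end Comp

end S19
end

/-- For a multilinear generalized polymorphism with `f₀, g₀` depending
on all inputs, all functions of degree ≥ 2 and balanced 2-valued-like inner functions:
every `gᵢ` and every `fⱼ` has a unique inclusion-maximal Fourier support set, namely its
set of relevant coordinates. -/
theorem stmt_19 (n m : ℕ)
    (f : Fin (m + 1) → (Fin n → ℝ) → ℝ) (g : Fin (n + 1) → (Fin m → ℝ) → ℝ)
    (fc : Fin (m + 1) → Finset (Fin n) → ℝ) (gc : Fin (n + 1) → Finset (Fin m) → ℝ)
    (hfexp : ∀ (j : Fin (m + 1)) (x : Fin n → ℝ),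
      f j x = ∑ S : Finset (Fin n), fc j S * ∏ i ∈ S, x i)
    (hgexp : ∀ (i : Fin (n + 1)) (y : Fin m → ℝ),
      g i y = ∑ T : Finset (Fin m), gc i T * ∏ j ∈ T, y j)
    (hdegf : ∀ j : Fin (m + 1), ∃ S : Finset (Fin n), fc j S ≠ 0 ∧ 2 ≤ S.card)
    (hdegg : ∀ i : Fin (n + 1), ∃ T : Finset (Fin m), gc i T ≠ 0 ∧ 2 ≤ T.card)
    (hbalf : ∀ j : Fin m, fc j.succ ∅ = 0)
    (hbalg : ∀ i : Fin n, gc i.succ ∅ = 0)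
    (h2vf : ∀ j : Fin m, TwoValuedLike (fc j.succ))
    (h2vg : ∀ i : Fin n, TwoValuedLike (gc i.succ))
    (hf0dep : ∀ i : Fin n, DependsOnCube (f 0) i)
    (hg0dep : ∀ j : Fin m, DependsOnCube (g 0) j)
    (hpoly : ∀ z : Fin n → Fin m → ℝ, (∀ i j, z i j = 1 ∨ z i j = -1) →
      f 0 (fun i => g i.succ (z i)) = g 0 (fun j => f j.succ (fun i => z i j))) :
    (∀ i : Fin n,
      gc i.succ (univ.filter (fun j => DependsOnCube (g i.succ) j)) ≠ 0 ∧
      ∀ T : Finset (Fin m), gc i.succ T ≠ 0 →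
        T ⊆ univ.filter (fun j => DependsOnCube (g i.succ) j)) ∧
    (∀ j : Fin m,
      fc j.succ (univ.filter (fun i => DependsOnCube (f j.succ) i)) ≠ 0 ∧
      ∀ S : Finset (Fin n), fc j.succ S ≠ 0 →
        S ⊆ univ.filter (fun i => DependsOnCube (f j.succ) i)) := by
  classical
  -- the Star relation
  have hstar : S19.Star (fc 0) (gc 0) (fun i => gc i.succ) (fun j => fc j.succ) := by
    intro ρ
    have hL := S19.comp_coeff (f 0) (fun i => g i.succ) (fc 0) (fun i => gc i.succ)
      (hfexp 0) (fun i => hgexp i.succ) (fun i => hbalg i) ρ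
    have hRt := S19.comp_coeff (g 0) (fun j => f j.succ) (gc 0) (fun j => fc j.succ)
      (hgexp 0) (fun j => hfexp j.succ) (fun j => hbalf j)
      (fun j => univ.filter fun i => j ∈ ρ i)
    have hsum : ∑ σ : Fin n → Fin m → Bool,
        f 0 (fun i => g i.succ (S19.cval (σ i))) * ∏ i, S19.chi (ρ i) (σ i)
        = ∑ τ : Fin m → Fin n → Bool,
        g 0 (fun j => f j.succ (S19.cval (τ j)))
          * ∏ j, S19.chi (univ.filter fun i => j ∈ ρ i) (τ j) := by
      refine Fintype.sum_equiv (S19.transposeEquiv (Fin n) (Fin m)) _ _ fun σ => ?_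
      have hcube : ∀ (i : Fin n) (j : Fin m),
          S19.cval (σ i) j = 1 ∨ S19.cval (σ i) j = -1 := by
        intro i j
        unfold S19.cval S19.bval
        split
        · exact Or.inl rfl
        · exact Or.inr rfl
      have hval := hpoly (fun i => S19.cval (σ i)) hcube
      have hvals : g 0 (fun j => f j.succ (fun i => S19.cval (σ i) j))
          = g 0 (fun j => f j.succ (S19.cval (Function.swap σ j))) := rfl
      rw [hval, hvals, S19.chi_transpose ρ σ]
      rfl
    rw [hL] at hsum
    rw [hRt] at hsum
    have hset : (univ.filter fun j : Fin m =>
        (univ.filter fun i : Fin n => j ∈ ρ i).Nonempty) = univ.biUnion ρ := by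
      ext j
      simp [Finset.filter_nonempty_iff]
    rw [hset] at hsum
    have hcard : (2:ℝ) ^ (Fintype.card (Fin m) * Fintype.card (Fin n))
        = 2 ^ (Fintype.card (Fin n) * Fintype.card (Fin m)) := by
      rw [Nat.mul_comm]
    rw [hcard] at hsum
    have hne : (2:ℝ) ^ (Fintype.card (Fin n) * Fintype.card (Fin m)) ≠ 0 := by positivity
    exact mul_left_cancel₀ hne hsum
  have hstar' : S19.Star (gc 0) (fc 0) (fun j => fc j.succ) (fun i => gc i.succ) :=
    S19.star_symm hstar
  -- basic hypotheses
  have hp0 : ∀ (i : Fin n) (T : Finset (Fin m)), gc i.succ T ≠ 0 → T.Nonempty := by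
    intro i T hT
    rw [Finset.nonempty_iff_ne_empty]
    intro h
    exact hT (h ▸ hbalg i)
  have hq0 : ∀ (j : Fin m) (S : Finset (Fin n)), fc j.succ S ≠ 0 → S.Nonempty := by
    intro j S hS
    rw [Finset.nonempty_iff_ne_empty]
    intro h
    exact hS (h ▸ hbalf j)
  have hpne : ∀ i : Fin n, ∃ T, gc i.succ T ≠ 0 := by
    intro i
    obtain ⟨T, hT, _⟩ := hdegg i.succ
    exact ⟨T, hT⟩
  have hqne : ∀ j : Fin m, ∃ S, fc j.succ S ≠ 0 := by
    intro j
    obtain ⟨S, hS, _⟩ := hdegf j.succ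
    exact ⟨S, hS⟩
  have hp2 : ∀ (i : Fin n) (j : Fin m), (∃ T, gc i.succ T ≠ 0 ∧ j ∈ T) →
      ∃ T, gc i.succ T ≠ 0 ∧ 2 ≤ T.card ∧ j ∈ T :=
    fun i => S19.twoValued_consequence (h2vg i) (hdegg i.succ)
  have hq2 : ∀ (j : Fin m) (i : Fin n), (∃ S, fc j.succ S ≠ 0 ∧ i ∈ S) →
      ∃ S, fc j.succ S ≠ 0 ∧ 2 ≤ S.card ∧ i ∈ S :=
    fun j => S19.twoValued_consequence (h2vf j) (hdegf j.succ)
  have ha : ∀ i : Fin n, ∃ R, fc 0 R ≠ 0 ∧ i ∈ R := by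
    intro i
    have := (S19.dependsOn_iff (f 0) (fc 0) (hfexp 0) i).mp (hf0dep i)
    obtain ⟨S, hS, hiS⟩ := this
    exact ⟨S, hS, hiS⟩
  have hb : ∀ j : Fin m, ∃ C, gc 0 C ≠ 0 ∧ j ∈ C := by
    intro j
    have := (S19.dependsOn_iff (g 0) (gc 0) (hgexp 0) j).mp (hg0dep j)
    obtain ⟨T, hT, hjT⟩ := this
    exact ⟨T, hT, hjT⟩
  constructor
  · intro i
    have hfilter : (univ.filter fun j => DependsOnCube (g i.succ) j)
        = univ.filter fun j => ∃ T, gc i.succ T ≠ 0 ∧ j ∈ T := by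
      ext j
      simp only [mem_filter, mem_univ, true_and]
      exact S19.dependsOn_iff (g i.succ) (gc i.succ) (hgexp i.succ) j
    constructor
    · rw [hfilter]
      exact S19.core hstar hp0 hq0 hpne hqne hq2 ha hb i
    · intro T hT j hjT
      rw [hfilter]
      exact mem_filter.mpr ⟨mem_univ j, T, hT, hjT⟩
  · intro j
    have hfilter : (univ.filter fun i => DependsOnCube (f j.succ) i)
        = univ.filter fun i => ∃ S, fc j.succ S ≠ 0 ∧ i ∈ S := by
      ext i
      simp only [mem_filter, mem_univ, true_and]
      exact S19.dependsOn_iff (f j.succ) (fc j.succ) (hfexp j.succ) i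
    constructor
    · rw [hfilter]
      exact S19.core hstar' hq0 hp0 hqne hpne hp2 hb ha j
    · intro S hS i hiS
      rw [hfilter]
      exact mem_filter.mpr ⟨mem_univ i, S, hS, hiS⟩
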